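/- arXiv:2209.12315 — 3 statements merged into one kernel-verified Lean document; each statement's English description precedes it below -/
import Mathlib

section
/- Let G be a finite simple graph, let 𝒯 = (T, {X_t}_{t∈V(T)}) be a tree decomposition of G, and let ℋ = {H_j}_{j∈J} be a finite family of connected non-null subgraphs of G. For each node t of T let X'_t = {j ∈ J : V(H_j) ∩ X_t ≠ ∅}. Then 𝒯' = (T, {X'_t}_{t∈V(T)}) is a tree decomposition of the graph G(ℋ), and α(𝒯') ≤ α(𝒯). -/
open SimpleGraph

variable {V : Type*}

/-- The `k`-th power of a graph: distinct vertices are adjacent iff their distance is at most `k`. -/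
def SimpleGraph.power (G : SimpleGraph V) (k : ℕ) : SimpleGraph V where
  Adj u v := u ≠ v ∧ G.Reachable u v ∧ G.dist u v ≤ k
  symm := ⟨by
    rintro u v ⟨h1, h2, h3⟩
    exact ⟨h1.symm, h2.symm, by rwa [SimpleGraph.dist_comm]⟩⟩
  loopless := ⟨fun u h => h.1 rfl⟩

/-- A set of vertices is independent if it is pairwise non-adjacent. -/
def SimpleGraph.IsIndepSetOn (G : SimpleGraph V) (s : Set V) : Prop :=
  s.Pairwise fun u v => ¬ G.Adj u v

/-- The independence number of the subgraph of `G` induced by `X`. -/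
noncomputable def indepNumOn (G : SimpleGraph V) (X : Set V) : ℕ :=
  sSup {n | ∃ S : Finset V, ↑S ⊆ X ∧ G.IsIndepSetOn ↑S ∧ S.card = n}

/-- `(T, X)` is a tree decomposition of `G`. -/
structure IsTreeDecompOn {ι : Type*} (G : SimpleGraph V) (T : SimpleGraph ι) (X : ι → Set V) :
    Prop where
  isTree : T.IsTree
  exists_bag : ∀ v : V, ∃ t, v ∈ X t
  exists_bag_edge : ∀ ⦃u v : V⦄, G.Adj u v → ∃ t, u ∈ X t ∧ v ∈ X t
  subtree_connected : ∀ v : V, (T.induce {t | v ∈ X t}).Connected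

/-- The independence number of a tree decomposition with bags `X`. -/
noncomputable def decompIndepNum {ι : Type*} (G : SimpleGraph V) (X : ι → Set V) : ℕ :=
  ⨆ t, indepNumOn G (X t)

/-- The tree-independence number: the minimum independence number over all tree decompositions. -/
noncomputable def treeIndepNum (G : SimpleGraph V) : ℕ :=
  sInf {n | ∃ (ι : Type) (T : SimpleGraph ι) (X : ι → Set V),
    Finite ι ∧ IsTreeDecompOn G T X ∧ decompIndepNum G X = n}

/-- The graph `G(ℋ)` on the index set of a family of (vertex sets of) subgraphs of `G`:
two distinct indices are adjacent iff the subgraphs share a vertex or are joined by an edge. -/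
def packingGraph {J : Type*} (G : SimpleGraph V) (S : J → Set V) : SimpleGraph J where
  Adj i j := i ≠ j ∧ ((S i ∩ S j).Nonempty ∨ ∃ u ∈ S i, ∃ v ∈ S j, G.Adj u v)
  symm := ⟨by
    rintro i j ⟨hne, h⟩
    refine ⟨hne.symm, ?_⟩
    rcases h with ⟨x, hx⟩ | ⟨u, hu, v, hv, huv⟩
    · exact Or.inl ⟨x, hx.2, hx.1⟩
    · exact Or.inr ⟨v, hv, u, hu, huv.symm⟩⟩
  loopless := ⟨fun i h => h.1 rfl⟩

/-- A graph is chordal if it has no induced cycle of length at least four. -/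
def IsChordal (G : SimpleGraph V) : Prop :=
  ∀ n : ℕ, 4 ≤ n → ∀ s : Set V, IsEmpty (G.induce s ≃g cycleGraph n)


theorem stmt_0 {V ι J : Type*} [Fintype V] [Finite ι] [Finite J]
    (G : SimpleGraph V) (T : SimpleGraph ι) (X : ι → Set V)
    (hT : IsTreeDecompOn G T X)
    (H : J → G.Subgraph) (hH : ∀ j, (H j).Connected) :
    IsTreeDecompOn (packingGraph G (fun j => (H j).verts)) T
      (fun t => {j | ((H j).verts ∩ X t).Nonempty}) ∧
    decompIndepNum (packingGraph G (fun j => (H j).verts))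
      (fun t => {j | ((H j).verts ∩ X t).Nonempty}) ≤ decompIndepNum G X := by
  classical
  set Gp := packingGraph G (fun j => (H j).verts) with hGp
  -- every vertex of a subgraph witnesses membership of its index in a bag
  have aux1 : ∀ (j : J) (v : V) (hv : v ∈ (H j).verts), ∀ (t₁ t₂ : ι)
      (h1 : v ∈ X t₁) (h2 : v ∈ X t₂),
      (T.induce {t | ((H j).verts ∩ X t).Nonempty}).Reachable
        ⟨t₁, ⟨v, hv, h1⟩⟩ ⟨t₂, ⟨v, hv, h2⟩⟩ := by
    intro j v hv t₁ t₂ h1 h2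
    have hsub : {t | v ∈ X t} ⊆ {t | ((H j).verts ∩ X t).Nonempty} :=
      fun t ht => ⟨v, hv, ht⟩
    have hr : (T.induce {t | v ∈ X t}).Reachable ⟨t₁, h1⟩ ⟨t₂, h2⟩ :=
      (hT.subtree_connected v).preconnected _ _
    exact hr.map (T.induceHomOfLE hsub).toHom
  have key : ∀ (j : J) (a b : (H j).verts) (p : (H j).coe.Walk a b)
      (t₁ t₂ : ι) (h1 : (a : V) ∈ X t₁) (h2 : (b : V) ∈ X t₂),
      (T.induce {t | ((H j).verts ∩ X t).Nonempty}).Reachable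
        ⟨t₁, ⟨a, a.2, h1⟩⟩ ⟨t₂, ⟨b, b.2, h2⟩⟩ := by
    intro j a b p
    induction p with
    | nil => intro t₁ t₂ h1 h2; exact aux1 j _ (Subtype.coe_prop _) t₁ t₂ h1 h2
    | @cons u w x hadj p ih =>
        intro t₁ t₂ h1 h2
        obtain ⟨t, hut, hwt⟩ := hT.exists_bag_edge ((H j).adj_sub hadj)
        exact (aux1 j _ u.2 t₁ t h1 hut).trans (ih t t₂ hwt h2)
  have hdecomp : IsTreeDecompOn Gp T (fun t => {j | ((H j).verts ∩ X t).Nonempty}) := by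
    refine ⟨hT.isTree, ?_, ?_, ?_⟩
    · intro j
      obtain ⟨v, hv⟩ := (hH j).nonempty
      obtain ⟨t, ht⟩ := hT.exists_bag v
      exact ⟨t, v, hv, ht⟩
    · rw [hGp]
      rintro i j ⟨hne, ⟨v, hvi, hvj⟩ | ⟨u, hu, v, hv, huv⟩⟩
      · obtain ⟨t, ht⟩ := hT.exists_bag v
        exact ⟨t, ⟨v, hvi, ht⟩, ⟨v, hvj, ht⟩⟩
      · obtain ⟨t, hut, hvt⟩ := hT.exists_bag_edge huv
        exact ⟨t, ⟨u, hu, hut⟩, ⟨v, hv, hvt⟩⟩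
    · intro j
      obtain ⟨v, hv⟩ := (hH j).nonempty
      obtain ⟨t, ht⟩ := hT.exists_bag v
      have : Nonempty {t | j ∈ {j | ((H j).verts ∩ X t).Nonempty}} := ⟨⟨t, v, hv, ht⟩⟩
      constructor
      rintro ⟨t₁, hv1⟩ ⟨t₂, hv2⟩
      obtain ⟨v₁, hv₁, hx₁⟩ := hv1
      obtain ⟨v₂, hv₂, hx₂⟩ := hv2
      obtain ⟨p⟩ := (hH j).preconnected ⟨v₁, hv₁⟩ ⟨v₂, hv₂⟩
      exact key j ⟨v₁, hv₁⟩ ⟨v₂, hv₂⟩ p t₁ t₂ hx₁ hx₂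
  refine ⟨hdecomp, ?_⟩
  have hbdd : ∀ (Y : Set V), BddAbove {n | ∃ S : Finset V, ↑S ⊆ Y ∧
      G.IsIndepSetOn ↑S ∧ S.card = n} := by
    intro Y
    refine ⟨Fintype.card V, ?_⟩
    rintro n ⟨S, -, -, rfl⟩
    exact S.card_le_univ
  have hstep : ∀ t : ι, indepNumOn Gp {j | ((H j).verts ∩ X t).Nonempty}
      ≤ indepNumOn G (X t) := by
    intro t
    refine csSup_le ⟨0, ∅, by simp, by simp [SimpleGraph.IsIndepSetOn], rfl⟩ ?_
    rintro n ⟨S, hSsub, hSind, rfl⟩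
    have hmem : ∀ j : {x // x ∈ S}, ((H j.1).verts ∩ X t).Nonempty :=
      fun j => hSsub j.2
    set f : {x // x ∈ S} → V := fun j => (hmem j).some with hf
    have hfmem : ∀ j, f j ∈ (H j.1).verts ∩ X t := fun j => (hmem j).some_mem
    have hfinj : Function.Injective f := by
      intro j k hjk
      by_contra hne
      have hne' : j.1 ≠ k.1 := fun h => hne (Subtype.ext h)
      exact hSind j.2 k.2 hne' (by rw [hGp]; exact ⟨hne', Or.inl ⟨f j, (hfmem j).1, hjk ▸ (hfmem k).1⟩⟩)
    set W : Finset V := S.attach.image f with hW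
    have hcard : W.card = S.card := by
      rw [hW, Finset.card_image_of_injective _ hfinj, Finset.card_attach]
    refine le_csSup (hbdd (X t)) ⟨W, ?_, ?_, hcard⟩
    · intro v hv
      simp only [hW, Finset.coe_image, Set.mem_image, Finset.mem_coe] at hv
      obtain ⟨j, -, rfl⟩ := hv
      exact (hfmem j).2
    · intro u hu v hv huv hadj
      simp only [hW, Finset.coe_image, Set.mem_image, Finset.mem_coe] at hu hv
      obtain ⟨j, -, rfl⟩ := hu
      obtain ⟨k, -, rfl⟩ := hv
      have hne : j.1 ≠ k.1 := by
        intro h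
        exact huv (congrArg f (Subtype.ext h))
      exact hSind j.2 k.2 hne (by rw [hGp]; exact ⟨hne, Or.inr ⟨f j, (hfmem j).1, f k, (hfmem k).1, hadj⟩⟩)
  unfold decompIndepNum
  rcases isEmpty_or_nonempty ι with hι | hι
  · simp [ciSup_of_empty]
  · exact ciSup_le fun t => (hstep t).trans
      (le_ciSup (f := fun t => indepNumOn G (X t)) (Set.Finite.bddAbove (Set.finite_range _)) t)
end

section
/- Let G be a finite simple graph and let k be a positive integer. Then tree-α(G^{k+2}) ≤ tree-α(G^k). -/
open SimpleGraph

variable {V : Type*}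

lemma reach_dist_triangle {G : SimpleGraph V} {u v w : V} (h1 : G.Reachable u v)
    (h2 : G.Reachable v w) : G.dist u w ≤ G.dist u v + G.dist v w := by
  obtain ⟨p, hp⟩ := h1.exists_walk_length_eq_dist
  obtain ⟨q, hq⟩ := h2.exists_walk_length_eq_dist
  calc G.dist u w ≤ (p.append q).length := SimpleGraph.dist_le _
    _ = _ := by rw [SimpleGraph.Walk.length_append, hp, hq]

lemma exists_adj_dist {G : SimpleGraph V} {u v : V} {d : ℕ} (h : G.Reachable u v)
    (hd : G.dist u v = d + 1) : ∃ u', G.Adj u u' ∧ G.Reachable u' v ∧ G.dist u' v = d := by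
  obtain ⟨p, hp⟩ := h.exists_walk_length_eq_dist
  cases p with
  | nil => rw [SimpleGraph.dist_self] at hd; omega
  | @cons _ u' _ ha q =>
    rw [hd] at hp
    simp only [SimpleGraph.Walk.length_cons] at hp
    have hq : q.length = d := by omega
    refine ⟨u', ha, q.reachable, le_antisymm (hq ▸ SimpleGraph.dist_le q) ?_⟩
    obtain ⟨r, hr⟩ := q.reachable.exists_walk_length_eq_dist
    have : G.dist u v ≤ (SimpleGraph.Walk.cons ha r).length := SimpleGraph.dist_le _
    simp only [SimpleGraph.Walk.length_cons, hr, hd] at this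
    omega

def induceHomOfSubset {ι : Type*} (H : SimpleGraph ι) {A B : Set ι} (hAB : A ⊆ B) :
    H.induce A →g H.induce B :=
  ⟨Set.inclusion hAB, fun h => h⟩

lemma reachable_induce_mono {ι : Type*} (H : SimpleGraph ι) {A B : Set ι} (hAB : A ⊆ B)
    {x y : ι} {hx : x ∈ A} {hy : y ∈ A} (h : (H.induce A).Reachable ⟨x, hx⟩ ⟨y, hy⟩) :
    (H.induce B).Reachable ⟨x, hAB hx⟩ ⟨y, hAB hy⟩ :=
  h.map (induceHomOfSubset H hAB)

lemma zero_mem_indepSets (G : SimpleGraph V) (X : Set V) :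
    0 ∈ {n | ∃ S : Finset V, ↑S ⊆ X ∧ G.IsIndepSetOn ↑S ∧ S.card = n} :=
  ⟨∅, by simp, by simp [SimpleGraph.IsIndepSetOn], rfl⟩

lemma indepNumOn_le_of_map [Fintype V] {G G' : SimpleGraph V} {X Y : Set V}
    (hyp : ∀ S : Finset V, ↑S ⊆ Y → G'.IsIndepSetOn ↑S →
      ∃ S' : Finset V, ↑S' ⊆ X ∧ G.IsIndepSetOn ↑S' ∧ S'.card = S.card) :
    indepNumOn G' Y ≤ indepNumOn G X := by
  apply csSup_le_csSup
  · exact ⟨Fintype.card V, fun n ⟨S, _, _, hc⟩ => hc ▸ Finset.card_le_univ S⟩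
  · exact ⟨0, zero_mem_indepSets G' Y⟩
  · rintro n ⟨S, hS, hind, rfl⟩
    obtain ⟨S', h1, h2, h3⟩ := hyp S hS hind
    exact ⟨S', h1, h2, h3⟩

lemma indepNumOn_le_card [Fintype V] (G : SimpleGraph V) (X : Set V) :
    indepNumOn G X ≤ Fintype.card V := by
  apply csSup_le ⟨0, zero_mem_indepSets G X⟩
  rintro n ⟨S, _, _, hc⟩
  exact hc ▸ Finset.card_le_univ S

lemma trivialDecomp [Fintype V] (G : SimpleGraph V) :
    {n | ∃ (ι : Type) (T : SimpleGraph ι) (X : ι → Set V),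
      Finite ι ∧ IsTreeDecompOn G T X ∧ decompIndepNum G X = n}.Nonempty := by
  have hconn : ∀ (s : Set Unit), s.Nonempty → ((⊥ : SimpleGraph Unit).induce s).Connected := by
    intro s hs
    have : Nonempty s := hs.to_subtype
    exact ⟨fun a b => (Subsingleton.elim a b) ▸ SimpleGraph.Reachable.refl a⟩
  refine ⟨_, Unit, ⊥, fun _ => Set.univ, inferInstance, ?_, rfl⟩
  refine ⟨⟨⟨fun a b => (Subsingleton.elim a b) ▸ SimpleGraph.Reachable.refl a⟩,
      SimpleGraph.isAcyclic_bot⟩,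
    fun v => ⟨(), Set.mem_univ v⟩,
    fun u v _ => ⟨(), Set.mem_univ u, Set.mem_univ v⟩,
    fun v => hconn _ ⟨(), Set.mem_univ v⟩⟩

lemma treeIndepNum_exists [Fintype V] (G : SimpleGraph V) :
    ∃ (ι : Type) (T : SimpleGraph ι) (X : ι → Set V),
      Finite ι ∧ IsTreeDecompOn G T X ∧ decompIndepNum G X = treeIndepNum G := by
  unfold treeIndepNum
  exact Nat.sInf_mem (trivialDecomp G)

lemma treeIndepNum_le [Fintype V] (G : SimpleGraph V) {ι : Type} (T : SimpleGraph ι)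
    (X : ι → Set V) (hfin : Finite ι) (hdec : IsTreeDecompOn G T X) :
    treeIndepNum G ≤ decompIndepNum G X := by
  unfold treeIndepNum
  exact Nat.sInf_le ⟨ι, T, X, hfin, hdec, rfl⟩

theorem stmt_2 {V : Type*} [Fintype V] (G : SimpleGraph V) (k : ℕ) (hk : 0 < k) :
    treeIndepNum (G.power (k + 2)) ≤ treeIndepNum (G.power k) := by
  classical
  obtain ⟨ι, T, X, hfin, hdec, hval⟩ := treeIndepNum_exists (G.power k)
  haveI : Nonempty ι := hdec.isTree.isConnected.nonempty
  let Y : ι → Set V := fun t => {w | ∃ u ∈ X t, w = u ∨ G.Adj w u}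
  have hXY : ∀ t, X t ⊆ Y t := fun t u hu => ⟨u, hu, Or.inl rfl⟩
  have hnear : ∀ {w u : V}, (w = u ∨ G.Adj w u) → G.Reachable w u ∧ G.dist w u ≤ 1 := by
    rintro w u (rfl | h)
    · exact ⟨SimpleGraph.Reachable.refl w, by rw [SimpleGraph.dist_self]; omega⟩
    · refine ⟨h.reachable, ?_⟩
      exact SimpleGraph.dist_le h.toWalk
  -- the new bags form a tree decomposition of G^(k+2)
  have hdecY : IsTreeDecompOn (G.power (k + 2)) T Y := by
    refine ⟨hdec.isTree, fun v => (hdec.exists_bag v).imp (fun t ht => hXY t ht), ?_, ?_⟩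
    · rintro u v ⟨huv, hr, hd⟩
      rcases le_or_gt (G.dist u v) k with hle | hgt
      · obtain ⟨t, h1, h2⟩ := hdec.exists_bag_edge
          (show (G.power k).Adj u v from ⟨huv, hr, hle⟩)
        exact ⟨t, hXY t h1, hXY t h2⟩
      · have hcase : G.dist u v = k + 1 ∨ G.dist u v = k + 2 := by omega
        rcases hcase with h | h
        · obtain ⟨u', ha, hr', hd'⟩ := exists_adj_dist hr h
          have hne' : u' ≠ v := by
            intro e; rw [e, SimpleGraph.dist_self] at hd'; omega
          obtain ⟨t, h1, h2⟩ := hdec.exists_bag_edge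
            (show (G.power k).Adj u' v from ⟨hne', hr', le_of_eq hd'⟩)
          exact ⟨t, ⟨u', h1, Or.inr ha⟩, hXY t h2⟩
        · obtain ⟨u', ha, hr', hd'⟩ := exists_adj_dist hr h
          have hr'' : G.Reachable v u' := hr'.symm
          have hd'' : G.dist v u' = k + 1 := by rwa [SimpleGraph.dist_comm]
          obtain ⟨v', hb, hr2, hd2⟩ := exists_adj_dist hr'' hd''
          have hne2 : u' ≠ v' := by
            intro e; rw [e, SimpleGraph.dist_self] at hd2; omega
          obtain ⟨t, h1, h2⟩ := hdec.exists_bag_edge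
            (show (G.power k).Adj u' v' from
              ⟨hne2, hr2.symm, by rw [SimpleGraph.dist_comm]; exact le_of_eq hd2⟩)
          exact ⟨t, ⟨u', h1, Or.inr ha⟩, ⟨v', h2, Or.inr hb⟩⟩
    · intro v
      have hC : (T.induce {t | v ∈ X t}).Connected := hdec.subtree_connected v
      have hCS : {t | v ∈ X t} ⊆ {t | v ∈ Y t} := fun t ht => ⟨v, ht, Or.inl rfl⟩
      have key : ∀ x (hx : x ∈ {t | v ∈ Y t}), ∃ c, ∃ hc : c ∈ {t | v ∈ X t},
          (T.induce {t | v ∈ Y t}).Reachable ⟨x, hx⟩ ⟨c, hCS hc⟩ := by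
        intro x hx
        obtain ⟨u, huX, hvu⟩ := hx
        rcases hvu with rfl | hadj
        · exact ⟨x, huX, SimpleGraph.Reachable.refl _⟩
        · have hd1 : G.dist v u ≤ k := by
            have := SimpleGraph.dist_le hadj.toWalk
            simp at this
            omega
          have hpk : (G.power k).Adj v u := ⟨hadj.ne, hadj.reachable, hd1⟩
          obtain ⟨c, hcv, hcu⟩ := hdec.exists_bag_edge hpk
          have hA : (T.induce {t | u ∈ X t}).Connected := hdec.subtree_connected u
          have hAS : {t | u ∈ X t} ⊆ {t | v ∈ Y t} := fun t ht => ⟨u, ht, Or.inr hadj⟩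
          have hreach := hA.preconnected ⟨x, huX⟩ ⟨c, hcu⟩
          exact ⟨c, hcv, reachable_induce_mono T hAS hreach⟩
      have hCne : {t | v ∈ X t}.Nonempty := hdec.exists_bag v
      haveI : Nonempty ↥{t | v ∈ Y t} := ⟨⟨hCne.choose, hCS hCne.choose_spec⟩⟩
      refine ⟨fun a b => ?_⟩
      obtain ⟨ca, hca, hra⟩ := key a.1 a.2
      obtain ⟨cb, hcb, hrb⟩ := key b.1 b.2
      have hmid := reachable_induce_mono T hCS (hC.preconnected ⟨ca, hca⟩ ⟨cb, hcb⟩)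
      exact (hra.trans hmid).trans hrb.symm
  -- independence numbers only decrease
  have hind : ∀ t, indepNumOn (G.power (k + 2)) (Y t) ≤ indepNumOn (G.power k) (X t) := by
    intro t
    apply indepNumOn_le_of_map
    intro S hS hindS
    let f : V → V := fun w => if h : ∃ u ∈ X t, w = u ∨ G.Adj w u then h.choose else w
    have hfX : ∀ w ∈ S, f w ∈ X t ∧ (w = f w ∨ G.Adj w (f w)) := by
      intro w hw
      have h : ∃ u ∈ X t, w = u ∨ G.Adj w u := hS hw
      have hfw : f w = h.choose := dif_pos h
      rw [hfw]
      exact ⟨h.choose_spec.1, h.choose_spec.2⟩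
    have hfar : ∀ w ∈ S, ∀ w' ∈ S, w ≠ w' →
        ¬ (G.Reachable w w' ∧ G.dist w w' ≤ k + 2) := by
      intro w hw w' hw' hne hcon
      exact hindS hw hw' hne ⟨hne, hcon.1, hcon.2⟩
    have hinj : Set.InjOn f ↑S := by
      intro w hw w' hw' he
      by_contra hne
      have n1 := hnear (hfX w hw).2
      have n2 := hnear (hfX w' hw').2
      have hr2 : G.Reachable (f w) w' := he ▸ n2.1.symm
      have hreach : G.Reachable w w' := n1.1.trans hr2
      have hd2 : G.dist (f w) w' ≤ 1 := by
        rw [SimpleGraph.dist_comm]; rw [← he] at n2; exact n2.2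
      have : G.dist w w' ≤ 2 := by
        have := reach_dist_triangle n1.1 hr2
        omega
      exact hfar w hw w' hw' hne ⟨hreach, by omega⟩
    refine ⟨S.image f, ?_, ?_, Finset.card_image_of_injOn hinj⟩
    · intro a ha
      simp only [Finset.coe_image, Set.mem_image, Finset.mem_coe] at ha
      obtain ⟨w, hw, rfl⟩ := ha
      exact (hfX w hw).1
    · intro a ha b hb hab hadj
      simp only [Finset.coe_image, Set.mem_image, Finset.mem_coe] at ha hb
      obtain ⟨w, hw, rfl⟩ := ha
      obtain ⟨w', hw', rfl⟩ := hb
      have hne : w ≠ w' := fun e => hab (e ▸ rfl)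
      obtain ⟨_, hrab, hdab⟩ := hadj
      have n1 := hnear (hfX w hw).2
      have n2 := hnear (hfX w' hw').2
      have hr1 : G.Reachable w (f w') := n1.1.trans hrab
      have hreach : G.Reachable w w' := hr1.trans n2.1.symm
      have hdw : G.dist w (f w') ≤ 1 + k := by
        have := reach_dist_triangle n1.1 hrab
        omega
      have hdtot : G.dist w w' ≤ k + 2 := by
        have h3 := reach_dist_triangle hr1 n2.1.symm
        have h4 : G.dist (f w') w' ≤ 1 := by rw [SimpleGraph.dist_comm]; exact n2.2
        omega
      exact hfar w hw w' hw' hne ⟨hreach, hdtot⟩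
  have h2 : decompIndepNum (G.power (k + 2)) Y ≤ decompIndepNum (G.power k) X := by
    apply ciSup_mono ?_ hind
    exact ⟨Fintype.card V, by rintro n ⟨t, rfl⟩; exact indepNumOn_le_card _ _⟩
  calc treeIndepNum (G.power (k + 2)) ≤ decompIndepNum (G.power (k + 2)) Y :=
        treeIndepNum_le _ T Y hfin hdecY
    _ ≤ decompIndepNum (G.power k) X := h2
    _ = treeIndepNum (G.power k) := hval
end

section
/- Let m be an odd positive integer, let G be a finite simple graph, and let ℋ = {H_j}_{j∈J} be a finite family of connected non-null subgraphs of G. Then tree-α(G^m(ℋ)) ≤ tree-α(G), where G^m(ℋ) is well defined because each H_j, being a connected subgraph of G, is also a connected subgraph of G^m. -/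
open SimpleGraph

variable {V : Type*}

/- ### Auxiliary lemmas -/

lemma reach_induce_mono {W : Type*} (T : SimpleGraph W) {s A : Set W} (h : s ⊆ A)
    {a b : W} (ha : a ∈ s) (hb : b ∈ s)
    (hr : (T.induce s).Reachable ⟨a, ha⟩ ⟨b, hb⟩) :
    (T.induce A).Reachable ⟨a, h ha⟩ ⟨b, h hb⟩ := by
  let f : T.induce s →g T.induce A := ⟨Set.inclusion h, fun {x y} hxy => hxy⟩
  exact hr.map f

lemma split_walk {G : SimpleGraph V} (r s : ℕ) {u v : V} (p : G.Walk u v)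
    (hlen : p.length ≤ r + s + 1) : ∃ a b : V, (a = b ∨ G.Adj a b) ∧
      G.Reachable u a ∧ G.dist u a ≤ r ∧ G.Reachable b v ∧ G.dist b v ≤ s := by
  induction p generalizing r with
  | nil =>
    exact ⟨_, _, Or.inl rfl, .refl _, by simp [SimpleGraph.dist_self],
      .refl _, by simp [SimpleGraph.dist_self]⟩
  | @cons a b c h q ih =>
    cases r with
    | zero =>
      refine ⟨a, b, Or.inr h, .refl _, by simp [SimpleGraph.dist_self], ⟨q⟩, ?_⟩
      have := SimpleGraph.dist_le q
      simp only [Walk.length_cons] at hlen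
      omega
    | succ r' =>
      simp only [Walk.length_cons] at hlen
      obtain ⟨x, y, hxy, hrx, hdx, hry, hdy⟩ := ih r' (by omega)
      obtain ⟨w, hw⟩ := hrx.exists_walk_length_eq_dist
      refine ⟨x, y, hxy, ⟨Walk.cons h w⟩, ?_, hry, hdy⟩
      have := SimpleGraph.dist_le (Walk.cons h w)
      simp only [Walk.length_cons] at this
      omega

lemma support_conn {ι : Type*} {G : SimpleGraph V} {T : SimpleGraph ι} {X : ι → Set V}
    (hdec : IsTreeDecompOn G T X) {S : Set V}
    (hS : ∀ ⦃v⦄, v ∈ S → ∀ ⦃w⦄, w ∈ S → ∃ p : G.Walk v w, ∀ x ∈ p.support, x ∈ S)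
    (hne : S.Nonempty) :
    (T.induce {t | (X t ∩ S).Nonempty}).Connected := by
  set A : Set ι := {t | (X t ∩ S).Nonempty} with hA
  have hlift : ∀ {v : V}, v ∈ S → ∀ {t1 t2 : ι} (h1 : t1 ∈ A) (h2 : t2 ∈ A),
      v ∈ X t1 → v ∈ X t2 → (T.induce A).Reachable ⟨t1, h1⟩ ⟨t2, h2⟩ := by
    intro v hvS t1 t2 h1 h2 hv1 hv2
    have hsub : {t | v ∈ X t} ⊆ A := fun t ht => ⟨v, ht, hvS⟩
    have := (hdec.subtree_connected v).preconnected ⟨t1, hv1⟩ ⟨t2, hv2⟩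
    exact reach_induce_mono T hsub hv1 hv2 this
  have key : ∀ {v w : V} (p : G.Walk v w), (∀ x ∈ p.support, x ∈ S) →
      ∀ (t1 t2 : ι) (h1 : t1 ∈ A) (h2 : t2 ∈ A), v ∈ X t1 → w ∈ X t2 →
      (T.induce A).Reachable ⟨t1, h1⟩ ⟨t2, h2⟩ := by
    intro v w p
    induction p with
    | nil =>
      intro hsup t1 t2 h1 h2 hv hw
      exact hlift (hsup _ (by simp)) h1 h2 hv hw
    | @cons a b c h q ih =>
      intro hsup t1 t2 h1 h2 hv hw
      obtain ⟨t3, hat3, hbt3⟩ := hdec.exists_bag_edge h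
      have haS : a ∈ S := hsup _ (by simp)
      have hbS : b ∈ S := hsup _ (by simp [Walk.support_cons])
      have h3 : t3 ∈ A := ⟨a, hat3, haS⟩
      refine (hlift haS h1 h3 hv hat3).trans (ih ?_ t3 t2 h3 h2 hbt3 hw)
      intro x hx
      exact hsup x (by simp [Walk.support_cons, hx])
  obtain ⟨v0, hv0S⟩ := hne
  obtain ⟨t0, ht0⟩ := hdec.exists_bag v0
  haveI : Nonempty A := ⟨⟨t0, v0, ht0, hv0S⟩⟩
  refine ⟨fun x y => ?_⟩
  obtain ⟨t1, h1⟩ := x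
  obtain ⟨t2, h2⟩ := y
  obtain ⟨v, hv1, hvS⟩ := h1
  obtain ⟨w, hw2, hwS⟩ := h2
  obtain ⟨p, hp⟩ := hS hvS hwS
  exact key p hp t1 t2 ⟨v, hv1, hvS⟩ ⟨w, hw2, hwS⟩ hv1 hw2

lemma treeSet_nonempty (G : SimpleGraph V) :
    {n | ∃ (ι : Type) (T : SimpleGraph ι) (X : ι → Set V),
      Finite ι ∧ IsTreeDecompOn G T X ∧ decompIndepNum G X = n}.Nonempty := by
  refine ⟨_, PUnit, ⊥, fun _ => Set.univ, inferInstance, ⟨⟨?_, isAcyclic_bot⟩, ?_, ?_, ?_⟩, rfl⟩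
  · exact ⟨fun u v => by rw [Subsingleton.elim u v]⟩
  · exact fun v => ⟨PUnit.unit, trivial⟩
  · exact fun u v _ => ⟨PUnit.unit, trivial, trivial⟩
  · intro v
    haveI : Nonempty ({t : PUnit | v ∈ (Set.univ : Set V)}) := ⟨⟨PUnit.unit, trivial⟩⟩
    exact ⟨fun u w => by rw [Subsingleton.elim u w]⟩


theorem stmt_8 {V J : Type*} [Fintype V] [Finite J] (G : SimpleGraph V) (m : ℕ)
    (hm : 0 < m) (hodd : Odd m) (H : J → G.Subgraph) (hH : ∀ j, (H j).Connected) :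
    treeIndepNum (packingGraph (G.power m) (fun j => (H j).verts)) ≤ treeIndepNum G := by
  classical
  obtain ⟨r, hr⟩ := hodd
  set P := packingGraph (G.power m) (fun j => (H j).verts) with hPdef
  have hGmem : treeIndepNum G ∈ {n | ∃ (ι : Type) (T : SimpleGraph ι) (X : ι → Set V),
      Finite ι ∧ IsTreeDecompOn G T X ∧ decompIndepNum G X = n} :=
    Nat.sInf_mem (treeSet_nonempty G)
  obtain ⟨ι, T, X, hfin, hdec, heq⟩ := hGmem
  haveI := hfin
  haveI : Nonempty ι := hdec.isTree.isConnected.nonempty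
  -- the ball of radius r around H j
  set Sj : J → Set V := fun j => {v | ∃ u ∈ (H j).verts, G.Reachable v u ∧ G.dist v u ≤ r}
    with hSjdef
  set Y : ι → Set J := fun t => {j | (X t ∩ Sj j).Nonempty} with hYdef
  have hverts_sub : ∀ j, (H j).verts ⊆ Sj j := fun j u hu =>
    ⟨u, hu, Reachable.refl u, by simp [SimpleGraph.dist_self]⟩
  -- walks inside the balls
  have hSwalk : ∀ j, ∀ ⦃v⦄, v ∈ Sj j → ∀ ⦃w⦄, w ∈ Sj j →
      ∃ p : G.Walk v w, ∀ x ∈ p.support, x ∈ Sj j := by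
    intro j v hv w hw
    obtain ⟨u1, hu1, hru1, hdu1⟩ := hv
    obtain ⟨u2, hu2, hru2, hdu2⟩ := hw
    obtain ⟨p1, hp1⟩ := hru1.exists_walk_length_eq_dist
    obtain ⟨p3, hp3⟩ := hru2.exists_walk_length_eq_dist
    have hmem1 : ∀ {u' : V} (p : G.Walk v u'), u' = u1 ∨ u' = u2 →
        True := fun _ _ => trivial
    have hsup1 : ∀ {a b : V} (p : G.Walk a b), b ∈ (H j).verts → p.length ≤ r →
        ∀ x ∈ p.support, x ∈ Sj j := by
      intro a b p hb hlen x hx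
      refine ⟨b, hb, ⟨p.dropUntil x hx⟩, ?_⟩
      exact le_trans (SimpleGraph.dist_le _) (le_trans (Walk.length_dropUntil_le p hx) hlen)
    obtain ⟨q⟩ := (hH j).preconnected ⟨u1, hu1⟩ ⟨u2, hu2⟩
    let p2 : G.Walk u1 u2 := q.map (H j).hom
    have hsup2 : ∀ x ∈ p2.support, x ∈ Sj j := by
      intro x hx
      rw [show p2.support = _ from Walk.support_map _ _, List.mem_map] at hx
      obtain ⟨y, _, rfl⟩ := hx
      exact hverts_sub j y.2
    refine ⟨p1.append (p2.append p3.reverse), ?_⟩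
    intro x hx
    rw [Walk.mem_support_append_iff] at hx
    rcases hx with hx | hx
    · exact hsup1 p1 hu1 (by omega) x hx
    · rw [Walk.mem_support_append_iff] at hx
      rcases hx with hx | hx
      · exact hsup2 x hx
      · rw [Walk.support_reverse, List.mem_reverse] at hx
        exact hsup1 p3 hu2 (by omega) x hx
  -- (T, Y) is a tree decomposition of P
  have hPdec : IsTreeDecompOn P T Y := by
    refine ⟨hdec.isTree, ?_, ?_, ?_⟩
    · intro j
      obtain ⟨u, hu⟩ := (hH j).nonempty
      obtain ⟨t, ht⟩ := hdec.exists_bag u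
      exact ⟨t, u, ht, hverts_sub j hu⟩
    · rintro i j ⟨hne, hc⟩
      rcases hc with ⟨x, hxi, hxj⟩ | ⟨u, hu, v, hv, hne', hreach, hdist⟩
      · obtain ⟨t, ht⟩ := hdec.exists_bag x
        exact ⟨t, ⟨x, ht, hverts_sub i hxi⟩, ⟨x, ht, hverts_sub j hxj⟩⟩
      · obtain ⟨p, hp⟩ := hreach.exists_walk_length_eq_dist
        obtain ⟨a, b, hab, hra, hda, hrb, hdb⟩ := split_walk r r p (by omega)
        rcases hab with rfl | hab
        · obtain ⟨t, ht⟩ := hdec.exists_bag a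
          refine ⟨t, ⟨a, ht, u, hu, hra.symm, ?_⟩, ⟨a, ht, v, hv, hrb, hdb⟩⟩
          rwa [SimpleGraph.dist_comm]
        · obtain ⟨t, hat, hbt⟩ := hdec.exists_bag_edge hab
          refine ⟨t, ⟨a, hat, u, hu, hra.symm, ?_⟩, ⟨b, hbt, v, hv, hrb, hdb⟩⟩
          rwa [SimpleGraph.dist_comm]
    · intro j
      obtain ⟨u, hu⟩ := (hH j).nonempty
      exact support_conn hdec (hSwalk j) ⟨u, hverts_sub j hu⟩
  -- bag-wise independence comparison
  have hbag : ∀ t, indepNumOn P (Y t) ≤ indepNumOn G (X t) := by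
    intro t
    have hbddB : BddAbove {n | ∃ S : Finset V, ↑S ⊆ X t ∧ G.IsIndepSetOn ↑S ∧ S.card = n} :=
      ⟨Fintype.card V, fun n hn => by obtain ⟨S, _, _, rfl⟩ := hn; exact S.card_le_univ⟩
    have hne0 : {n | ∃ S : Finset J, ↑S ⊆ Y t ∧ P.IsIndepSetOn ↑S ∧ S.card = n}.Nonempty :=
      ⟨0, ∅, by simp, by simp [SimpleGraph.IsIndepSetOn], rfl⟩
    unfold indepNumOn
    apply csSup_le hne0
    rintro n ⟨SF, hsub, hind, rfl⟩
    by_cases hSF : SF.Nonempty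
    · obtain ⟨j0, hj0⟩ := hSF
      obtain ⟨v0, hv0, -⟩ := hsub (Finset.mem_coe.mpr hj0)
      haveI : Nonempty V := ⟨v0⟩
      set f : J → V := fun j => if h : j ∈ Y t then h.choose else Classical.arbitrary V
        with hfdef
      have hf : ∀ j ∈ SF, f j ∈ X t ∧ f j ∈ Sj j := by
        intro j hj
        have h : j ∈ Y t := hsub (Finset.mem_coe.mpr hj)
        simp only [hfdef, dif_pos h]
        exact h.choose_spec
      have hkey : ∀ i ∈ SF, ∀ j ∈ SF, i ≠ j → f i ≠ f j ∧ ¬ G.Adj (f i) (f j) := by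
        intro i hi j hj hij
        obtain ⟨hxi, ui, hui, hrui, hdui⟩ := hf i hi
        obtain ⟨hxj, uj, huj, hruj, hduj⟩ := hf j hj
        have hPadj : ¬ P.Adj i j := hind (Finset.mem_coe.mpr hi) (Finset.mem_coe.mpr hj) hij
        obtain ⟨w1, hw1⟩ := hrui.exists_walk_length_eq_dist
        obtain ⟨w2, hw2⟩ := hruj.exists_walk_length_eq_dist
        by_cases huv : ui = uj
        · exact absurd ⟨hij, Or.inl ⟨ui, hui, huv ▸ huj⟩⟩ hPadj
        constructor
        · intro hfeq
          apply hPadj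
          refine ⟨hij, Or.inr ⟨ui, hui, uj, huj, huv, ?_, ?_⟩⟩
          · exact ⟨w1.reverse.append (w2.copy hfeq.symm rfl)⟩
          · have := SimpleGraph.dist_le (w1.reverse.append (w2.copy hfeq.symm rfl))
            simp only [Walk.length_append, Walk.length_reverse, Walk.length_copy] at this
            omega
        · intro hadj
          apply hPadj
          refine ⟨hij, Or.inr ⟨ui, hui, uj, huj, huv, ?_, ?_⟩⟩
          · exact ⟨w1.reverse.append (Walk.cons hadj w2)⟩
          · have := SimpleGraph.dist_le (w1.reverse.append (Walk.cons hadj w2))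
            simp only [Walk.length_append, Walk.length_reverse, Walk.length_cons] at this
            omega
      have hinj : Set.InjOn f ↑SF := by
        intro i hi j hj hfeq
        by_contra hij
        exact (hkey i (Finset.mem_coe.mp hi) j (Finset.mem_coe.mp hj) hij).1 hfeq
      refine le_csSup hbddB ⟨SF.image f, ?_, ?_, ?_⟩
      · intro x hx
        simp only [Finset.coe_image, Set.mem_image, Finset.mem_coe] at hx
        obtain ⟨j, hj, rfl⟩ := hx
        exact (hf j hj).1
      · intro a ha b hb hab
        simp only [Finset.coe_image, Set.mem_image, Finset.mem_coe] at ha hb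
        obtain ⟨i, hi, rfl⟩ := ha
        obtain ⟨j, hj, rfl⟩ := hb
        have hij : i ≠ j := fun h => hab (by rw [h])
        exact (hkey i hi j hj hij).2
      · exact Finset.card_image_of_injOn hinj
    · rw [Finset.not_nonempty_iff_eq_empty.mp hSF]
      simp
  have hdcomp : decompIndepNum P Y ≤ decompIndepNum G X := by
    unfold decompIndepNum
    apply ciSup_le
    intro t
    exact le_trans (hbag t) (le_ciSup (f := fun t => indepNumOn G (X t)) (Set.Finite.bddAbove (Set.finite_range _)) t)
  have hle : treeIndepNum P ≤ decompIndepNum P Y :=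
    Nat.sInf_le ⟨ι, T, Y, hfin, hPdec, rfl⟩
  omega
end
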